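/- Let A be a real d×d matrix and κ₀ > 0 with ⟨Aξ, ξ⟩ ≥ κ₀·|ξ|² for all ξ ∈ ℝ^d, and let B be a real d×d matrix. Then the matrix-valued function s ↦ exp(−s·A)·B·exp(−s·Aᵀ) is Bochner integrable on [0,∞), and the matrix Σ := 2·∫₀^∞ exp(−s·A)·B·exp(−s·Aᵀ) ds satisfies the Lyapunov equation A·Σ + Σ·Aᵀ = 2·B. Moreover, if B is symmetric then Σ is symmetric, and if B is positive semidefinite then Σ is positive semidefinite. -/

import Mathlib

open Matrix MeasureTheory

open NormedSpace

attribute [local instance] Matrix.linftyOpNormedAddCommGroup Matrix.linftyOpNormedSpace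
  Matrix.linftyOpNormedRing Matrix.linftyOpNormedAlgebra

variable {d : ℕ}

/-- entry evaluation as a continuous linear map -/
noncomputable def entryCLM (i j : Fin d) : Matrix (Fin d) (Fin d) ℝ →L[ℝ] ℝ :=
  LinearMap.toContinuousLinearMap
    { toFun := fun M => M i j
      map_add' := fun M N => rfl
      map_smul' := fun c M => rfl }

theorem hasDerivAt_expE (A : Matrix (Fin d) (Fin d) ℝ) (s : ℝ) :
    HasDerivAt (fun t : ℝ => exp (-(t • A))) (-(A * exp (-(s • A)))) s := by
  have h := hasDerivAt_exp_smul_const' (𝕂 := ℝ) (-A) s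
  simp only [smul_neg] at h
  rw [neg_mul] at h
  exact h

theorem hasDerivAt_expE' (A : Matrix (Fin d) (Fin d) ℝ) (s : ℝ) :
    HasDerivAt (fun t : ℝ => exp (-(t • A))) (-(exp (-(s • A)) * A)) s := by
  have h := hasDerivAt_exp_smul_const (𝕂 := ℝ) (-A) s
  simp only [smul_neg] at h
  rw [mul_neg] at h
  exact h

theorem hasDerivAt_entry (A : Matrix (Fin d) (Fin d) ℝ) (s : ℝ) (i j : Fin d) :
    HasDerivAt (fun t : ℝ => exp (-(t • A)) i j) (-((A * exp (-(s • A))) i j)) s := by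
  have h := ((entryCLM i j).hasFDerivAt.comp_hasDerivAt s (hasDerivAt_expE A s))
  exact h

theorem sq_sum_decay (A : Matrix (Fin d) (Fin d) ℝ) (κ₀ : ℝ)
    (hA : ∀ v : Fin d → ℝ, κ₀ * ∑ i, v i ^ 2 ≤ ∑ i, (∑ j, A i j * v j) * v i)
    (ξ : Fin d → ℝ) {s : ℝ} (hs : 0 ≤ s) :
    ∑ i, ((exp (-(s • A))).mulVec ξ) i ^ 2
      ≤ Real.exp (-(2 * κ₀ * s)) * ∑ i, ξ i ^ 2 := by
  set x : ℝ → Fin d → ℝ := fun t => (exp (-(t • A))).mulVec ξ with hxdef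
  have hx : ∀ (t : ℝ) (i : Fin d),
      HasDerivAt (fun t => x t i) (-((A.mulVec (x t)) i)) t := by
    intro t i
    have h : HasDerivAt (fun t => ∑ j, exp (-(t • A)) i j * ξ j)
        (∑ j, -((A * exp (-(t • A))) i j) * ξ j) t :=
      HasDerivAt.fun_sum fun j _ => (hasDerivAt_entry A t i j).mul_const (ξ j)
    have e1 : (fun t => x t i) = fun t => ∑ j, exp (-(t • A)) i j * ξ j := by
      funext t; simp [hxdef, Matrix.mulVec, dotProduct]
    have e2 : (∑ j, -((A * exp (-(t • A))) i j) * ξ j) = -((A.mulVec (x t)) i) := by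
      simp only [hxdef, Matrix.mulVec, dotProduct, neg_mul, ← Finset.sum_neg_distrib,
        neg_inj, Matrix.mul_apply, Finset.sum_mul, Finset.mul_sum, mul_assoc]
      exact Finset.sum_comm ..
    rw [e1, ← e2]; exact h
  set φ : ℝ → ℝ := fun t => ∑ i, x t i ^ 2 with hφdef
  have hφ : ∀ t, HasDerivAt φ (∑ i, (2 : ℕ) * x t i ^ 1 * (-((A.mulVec (x t)) i))) t :=
    fun t => HasDerivAt.fun_sum fun i _ => (hx t i).fun_pow 2
  set ψ : ℝ → ℝ := fun t => Real.exp (2 * κ₀ * t) * φ t with hψdef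
  have hψ : ∀ t, HasDerivAt ψ
      (Real.exp (2 * κ₀ * t) * (2 * κ₀) * φ t
        + Real.exp (2 * κ₀ * t) * (∑ i, (2 : ℕ) * x t i ^ 1 * (-((A.mulVec (x t)) i)))) t :=
    fun t => by simpa using (((hasDerivAt_id t).const_mul (2 * κ₀)).exp).fun_mul (hφ t)
  have hψ' : ∀ t, Real.exp (2 * κ₀ * t) * (2 * κ₀) * φ t
        + Real.exp (2 * κ₀ * t) * (∑ i, (2 : ℕ) * x t i ^ 1 * (-((A.mulVec (x t)) i))) ≤ 0 := by
    intro t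
    have h1 : κ₀ * ∑ i, x t i ^ 2 ≤ ∑ i, (A.mulVec (x t)) i * x t i := by
      have := hA (x t)
      simpa [Matrix.mulVec, dotProduct] using this
    have h2 : (∑ i, (2 : ℕ) * x t i ^ 1 * (-((A.mulVec (x t)) i)))
        = -2 * ∑ i, (A.mulVec (x t)) i * x t i := by
      rw [Finset.mul_sum]; congr 1; ext i; push_cast; ring
    rw [h2]
    have he : (0:ℝ) < Real.exp (2 * κ₀ * t) := Real.exp_pos _
    nlinarith [he, h1]
  have hmono : Antitone ψ :=
    antitone_of_deriv_nonpos (fun t => (hψ t).differentiableAt)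
      (fun t => by rw [(hψ t).deriv]; exact hψ' t)
  have hψs : ψ s ≤ ψ 0 := hmono hs
  have hψ0 : ψ 0 = ∑ i, ξ i ^ 2 := by
    simp [hψdef, hφdef, hxdef]
  have hφs : Real.exp (2 * κ₀ * s) * φ s ≤ ∑ i, ξ i ^ 2 := by
    rw [← hψ0]; exact hψs
  have he : (0:ℝ) < Real.exp (2 * κ₀ * s) := Real.exp_pos _
  have key : φ s ≤ Real.exp (-(2 * κ₀ * s)) * ∑ i, ξ i ^ 2 := by
    rw [Real.exp_neg, inv_mul_eq_div, le_div_iff₀ he]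
    linarith [hφs, mul_comm (φ s) (Real.exp (2 * κ₀ * s))]
  exact key

theorem exp_entry_bound (A : Matrix (Fin d) (Fin d) ℝ) (κ₀ : ℝ)
    (hA : ∀ v : Fin d → ℝ, κ₀ * ∑ i, v i ^ 2 ≤ ∑ i, (∑ j, A i j * v j) * v i)
    {s : ℝ} (hs : 0 ≤ s) (i j : Fin d) :
    |exp (-(s • A)) i j| ≤ Real.exp (-(κ₀ * s)) := by
  have h := sq_sum_decay A κ₀ hA (Pi.single j 1) hs
  have hsum : ∑ k, (Pi.single j 1 : Fin d → ℝ) k ^ 2 = 1 := by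
    simp [Pi.single_apply, sq, Finset.sum_ite_eq']
  rw [hsum, mul_one] at h
  have hm : (exp (-(s • A)) *ᵥ Pi.single j 1) i = exp (-(s • A)) i j := by
    simp [Matrix.mulVec_single]
  have hterm : exp (-(s • A)) i j ^ 2 ≤ Real.exp (-(2 * κ₀ * s)) := by
    rw [← hm]
    refine le_trans ?_ h
    exact Finset.single_le_sum (f := fun k => (exp (-(s • A)) *ᵥ Pi.single j 1) k ^ 2)
      (fun k _ => sq_nonneg _) (Finset.mem_univ i)
  have h2 : exp (-(s • A)) i j ^ 2 ≤ Real.exp (-(κ₀ * s)) ^ 2 := by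
    have : Real.exp (-(κ₀ * s)) ^ 2 = Real.exp (-(2 * κ₀ * s)) := by
      rw [sq, ← Real.exp_add]; ring_nf
    rw [this]; exact hterm
  · have := Real.sqrt_le_sqrt h2
    rwa [Real.sqrt_sq_eq_abs, Real.sqrt_sq (Real.exp_pos _).le] at this

theorem coercive_transpose (A : Matrix (Fin d) (Fin d) ℝ) (κ₀ : ℝ)
    (hA : ∀ v : Fin d → ℝ, κ₀ * ∑ i, v i ^ 2 ≤ ∑ i, (∑ j, A i j * v j) * v i) :
    ∀ v : Fin d → ℝ, κ₀ * ∑ i, v i ^ 2 ≤ ∑ i, (∑ j, Aᵀ i j * v j) * v i := by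
  intro v
  refine (hA v).trans_eq ?_
  simp only [Matrix.transpose_apply, Finset.sum_mul]
  rw [Finset.sum_comm]
  congr 1; ext i; congr 1; ext j; ring

theorem continuous_entry (A : Matrix (Fin d) (Fin d) ℝ) (i j : Fin d) :
    Continuous fun s : ℝ => exp (-(s • A)) i j := by
  have h1 : Continuous fun s : ℝ => -(s • A) := by continuity
  exact (entryCLM i j).continuous.comp (exp_continuous.comp h1)

theorem prod_entry_bound (A B : Matrix (Fin d) (Fin d) ℝ) (κ₀ : ℝ)
    (hA : ∀ v : Fin d → ℝ, κ₀ * ∑ i, v i ^ 2 ≤ ∑ i, (∑ j, A i j * v j) * v i)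
    (hAT : ∀ v : Fin d → ℝ, κ₀ * ∑ i, v i ^ 2 ≤ ∑ i, (∑ j, Aᵀ i j * v j) * v i)
    {s : ℝ} (hs : 0 ≤ s) (i j : Fin d) :
    |(exp (-(s • A)) * B * exp (-(s • Aᵀ))) i j|
      ≤ (∑ k, ∑ l, |B l k|) * Real.exp (-(2 * κ₀) * s) := by
  calc |(exp (-(s • A)) * B * exp (-(s • Aᵀ))) i j|
      = |∑ k, ∑ l, exp (-(s • A)) i l * B l k * exp (-(s • Aᵀ)) k j| := by
        simp [Matrix.mul_apply, Finset.sum_mul]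
    _ ≤ ∑ k, ∑ l, |exp (-(s • A)) i l * B l k * exp (-(s • Aᵀ)) k j| :=
        (Finset.abs_sum_le_sum_abs _ _).trans (Finset.sum_le_sum fun k _ =>
          Finset.abs_sum_le_sum_abs _ _)
    _ ≤ ∑ k, ∑ l, Real.exp (-(κ₀ * s)) * |B l k| * Real.exp (-(κ₀ * s)) := by
        refine Finset.sum_le_sum fun k _ => Finset.sum_le_sum fun l _ => ?_
        rw [abs_mul, abs_mul]
        have b1 := exp_entry_bound A κ₀ hA hs i l
        have b2 := exp_entry_bound Aᵀ κ₀ hAT hs k j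
        have := mul_le_mul (mul_le_mul b1 (le_refl |B l k|) (abs_nonneg _) (Real.exp_pos _).le) b2
          (abs_nonneg _) (by positivity)
        exact this
    _ = (∑ k, ∑ l, |B l k|) * Real.exp (-(2 * κ₀) * s) := by
        rw [Finset.sum_mul]
        congr 1; ext k
        rw [Finset.sum_mul]
        congr 1; ext l
        rw [show Real.exp (-(κ₀ * s)) * |B l k| * Real.exp (-(κ₀ * s))
            = |B l k| * (Real.exp (-(κ₀ * s)) * Real.exp (-(κ₀ * s))) from by ring,
          ← Real.exp_add]
        congr 2
        ring

theorem main_integrable (A B : Matrix (Fin d) (Fin d) ℝ) (κ₀ : ℝ) (hκ₀ : 0 < κ₀)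
    (hA : ∀ v : Fin d → ℝ, κ₀ * ∑ i, v i ^ 2 ≤ ∑ i, (∑ j, A i j * v j) * v i)
    (hAT : ∀ v : Fin d → ℝ, κ₀ * ∑ i, v i ^ 2 ≤ ∑ i, (∑ j, Aᵀ i j * v j) * v i)
    (i j : Fin d) :
    IntegrableOn (fun s : ℝ => (exp (-(s • A)) * B * exp (-(s • Aᵀ))) i j)
      (Set.Ioi 0) := by
  have hdom : IntegrableOn (fun s : ℝ => (∑ k, ∑ l, |B l k|) * Real.exp (-(2 * κ₀) * s))
      (Set.Ioi 0) :=
    (exp_neg_integrableOn_Ioi 0 (by positivity)).const_mul _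
  refine Integrable.mono' hdom ?_ ?_
  · have hcont : Continuous fun s : ℝ =>
        (exp (-(s • A)) * B * exp (-(s • Aᵀ))) i j := by
      have h1 : Continuous fun s : ℝ => exp (-(s • A)) * B * exp (-(s • Aᵀ)) := by
        exact ((exp_continuous.comp (by continuity : Continuous fun s : ℝ => -(s • A))).mul
          continuous_const).mul
          (exp_continuous.comp (by continuity : Continuous fun s : ℝ => -(s • Aᵀ)))
      exact (entryCLM i j).continuous.comp h1
    exact hcont.aestronglyMeasurable.restrict
  · filter_upwards [ae_restrict_mem measurableSet_Ioi] with s hs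
    exact prod_entry_bound A B κ₀ hA hAT (le_of_lt hs) i j

noncomputable def lyapF (A B : Matrix (Fin d) (Fin d) ℝ) (s : ℝ) : Matrix (Fin d) (Fin d) ℝ :=
  exp (-(s • A)) * B * exp (-(s • Aᵀ))

theorem lyapF_hasDerivAt (A B : Matrix (Fin d) (Fin d) ℝ) (s : ℝ) (i j : Fin d) :
    HasDerivAt (fun t => lyapF A B t i j)
      (-((A * lyapF A B s) i j + (lyapF A B s * Aᵀ) i j)) s := by
  have hE := hasDerivAt_expE A s
  have hF := hasDerivAt_expE' Aᵀ s
  have hprod := (hE.mul_const B).mul hF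
  have hval : -(A * exp (-(s • A))) * B * exp (-(s • Aᵀ))
      + exp (-(s • A)) * B * -(exp (-(s • Aᵀ)) * Aᵀ)
      = -(A * lyapF A B s + lyapF A B s * Aᵀ) := by
    unfold lyapF; noncomm_ring
  rw [hval] at hprod
  have h := (entryCLM i j).hasFDerivAt.comp_hasDerivAt s hprod
  exact h

theorem lyapF_continuous (A B : Matrix (Fin d) (Fin d) ℝ) (i j : Fin d) :
    Continuous fun s : ℝ => lyapF A B s i j := by
  have h1 : Continuous fun s : ℝ => lyapF A B s := by
    unfold lyapF
    exact ((exp_continuous.comp (by continuity : Continuous fun s : ℝ => -(s • A))).mul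
      continuous_const).mul
      (exp_continuous.comp (by continuity : Continuous fun s : ℝ => -(s • Aᵀ)))
  exact (entryCLM i j).continuous.comp h1

theorem lyapF_tendsto (A B : Matrix (Fin d) (Fin d) ℝ) (κ₀ : ℝ) (hκ₀ : 0 < κ₀)
    (hA : ∀ v : Fin d → ℝ, κ₀ * ∑ i, v i ^ 2 ≤ ∑ i, (∑ j, A i j * v j) * v i)
    (hAT : ∀ v : Fin d → ℝ, κ₀ * ∑ i, v i ^ 2 ≤ ∑ i, (∑ j, Aᵀ i j * v j) * v i)
    (i j : Fin d) :
    Filter.Tendsto (fun s => lyapF A B s i j) Filter.atTop (nhds 0) := by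
  refine squeeze_zero_norm' (a := fun s => (∑ k, ∑ l, |B l k|) * Real.exp (-(2 * κ₀) * s)) ?_ ?_
  · filter_upwards [Filter.eventually_ge_atTop (0:ℝ)] with s hs
    simpa [Real.norm_eq_abs, lyapF] using prod_entry_bound A B κ₀ hA hAT hs i j
  · have h1 : Filter.Tendsto (fun s : ℝ => -(2 * κ₀) * s) Filter.atTop Filter.atBot := by
      apply Filter.Tendsto.const_mul_atTop_of_neg (by linarith) Filter.tendsto_id
    have h2 := Real.tendsto_exp_atBot.comp h1
    simpa using h2.const_mul (∑ k, ∑ l, |B l k|)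

theorem lyapF_deriv_integral (A B : Matrix (Fin d) (Fin d) ℝ) (κ₀ : ℝ) (hκ₀ : 0 < κ₀)
    (hA : ∀ v : Fin d → ℝ, κ₀ * ∑ i, v i ^ 2 ≤ ∑ i, (∑ j, A i j * v j) * v i)
    (hAT : ∀ v : Fin d → ℝ, κ₀ * ∑ i, v i ^ 2 ≤ ∑ i, (∑ j, Aᵀ i j * v j) * v i)
    (i j : Fin d) :
    (∫ s in Set.Ioi (0:ℝ), ((A * lyapF A B s) i j + (lyapF A B s * Aᵀ) i j)) = B i j := by
  have hint : ∀ i j : Fin d, IntegrableOn (fun s => lyapF A B s i j) (Set.Ioi 0) :=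
    fun i j => main_integrable A B κ₀ hκ₀ hA hAT i j
  have hAf : IntegrableOn (fun s => (A * lyapF A B s) i j) (Set.Ioi 0) := by
    have he : (fun s => (A * lyapF A B s) i j) = fun s => ∑ k, A i k * lyapF A B s k j := by
      funext s; simp [Matrix.mul_apply]
    rw [he]
    exact integrable_finset_sum _ fun k _ => (hint k j).const_mul _
  have hfA : IntegrableOn (fun s => (lyapF A B s * Aᵀ) i j) (Set.Ioi 0) := by
    have he : (fun s => (lyapF A B s * Aᵀ) i j) = fun s => ∑ k, lyapF A B s i k * Aᵀ k j := by
      funext s; simp [Matrix.mul_apply]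
    rw [he]
    exact integrable_finset_sum _ fun k _ => (hint i k).mul_const _
  have h := integral_Ioi_of_hasDerivAt_of_tendsto (a := (0:ℝ))
    (f := fun s => lyapF A B s i j)
    (f' := fun s => -((A * lyapF A B s) i j + (lyapF A B s * Aᵀ) i j))
    (lyapF_continuous A B i j).continuousWithinAt
    (fun x _ => lyapF_hasDerivAt A B x i j)
    ((hAf.add hfA).neg)
    (lyapF_tendsto A B κ₀ hκ₀ hA hAT i j)
  rw [MeasureTheory.integral_neg] at h
  have hf0 : lyapF A B 0 i j = B i j := by simp [lyapF]
  rw [hf0] at h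
  linarith

/-- Solution of the Lyapunov equation `AΣ + ΣAᵀ = 2B` by the integral
`Σ = 2∫₀^∞ exp(−sA) B exp(−sAᵀ) ds` (entrywise), for a coercive matrix `A`:
integrability, the Lyapunov identity, and preservation of symmetry and
positive semidefiniteness. -/
theorem lyapunov_integral_solution {d : ℕ}
    (A B : Matrix (Fin d) (Fin d) ℝ) (κ₀ : ℝ) (hκ₀ : 0 < κ₀)
    (hA : ∀ ξ : EuclideanSpace ℝ (Fin d),
      κ₀ * ‖ξ‖ ^ 2 ≤ ∑ i, (∑ j, A i j * ξ j) * ξ i) :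
    (∀ i j : Fin d, IntegrableOn
      (fun s : ℝ =>
        (NormedSpace.exp (-(s • A)) * B * NormedSpace.exp (-(s • Aᵀ))) i j)
      (Set.Ioi 0)) ∧
    ∀ S : Matrix (Fin d) (Fin d) ℝ,
      S = Matrix.of (fun i j => 2 * ∫ s in Set.Ioi (0 : ℝ),
          (NormedSpace.exp (-(s • A)) * B * NormedSpace.exp (-(s • Aᵀ))) i j) →
      (A * S + S * Aᵀ = (2 : ℝ) • B) ∧
      (Bᵀ = B → Sᵀ = S) ∧
      (Bᵀ = B → (∀ ξ : Fin d → ℝ, 0 ≤ ∑ i, (∑ j, B i j * ξ j) * ξ i) →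
        ∀ ξ : Fin d → ℝ, 0 ≤ ∑ i, (∑ j, S i j * ξ j) * ξ i) := by
  classical
  have hA' : ∀ v : Fin d → ℝ, κ₀ * ∑ i, v i ^ 2 ≤ ∑ i, (∑ j, A i j * v j) * v i := by
    intro v
    have h := hA ((WithLp.equiv 2 (Fin d → ℝ)).symm v)
    rw [EuclideanSpace.norm_eq] at h
    simp only [WithLp.equiv_symm_apply, PiLp.toLp_apply, Real.norm_eq_abs, sq_abs] at h
    rwa [Real.sq_sqrt (by positivity)] at h
  have hAT' := coercive_transpose A κ₀ hA'
  have hint : ∀ i j : Fin d, IntegrableOn (fun s => lyapF A B s i j) (Set.Ioi 0) :=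
    fun i j => main_integrable A B κ₀ hκ₀ hA' hAT' i j
  refine ⟨hint, ?_⟩
  intro S hS
  have hS1 : ∀ i j : Fin d, S i j = 2 * ∫ s in Set.Ioi (0:ℝ), lyapF A B s i j := by
    intro i j; rw [hS]; rfl
  refine ⟨?_, ?_, ?_⟩
  · -- Lyapunov identity
    ext i j
    have e1 : (∫ s in Set.Ioi (0:ℝ), ∑ k, A i k * lyapF A B s k j)
        = ∑ k, A i k * ∫ s in Set.Ioi (0:ℝ), lyapF A B s k j := by
      rw [MeasureTheory.integral_finset_sum _ fun k _ => ((hint k j).const_mul _)]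
      exact Finset.sum_congr rfl fun k _ => MeasureTheory.integral_const_mul _ _
    have e2 : (∫ s in Set.Ioi (0:ℝ), ∑ k, lyapF A B s i k * Aᵀ k j)
        = ∑ k, (∫ s in Set.Ioi (0:ℝ), lyapF A B s i k) * Aᵀ k j := by
      rw [MeasureTheory.integral_finset_sum _ fun k _ => ((hint i k).mul_const _)]
      exact Finset.sum_congr rfl fun k _ => MeasureTheory.integral_mul_const _ _
    have int1 : IntegrableOn (fun s => ∑ k, A i k * lyapF A B s k j) (Set.Ioi 0) :=
      integrable_finset_sum _ fun k _ => (hint k j).const_mul _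
    have int2 : IntegrableOn (fun s => ∑ k, lyapF A B s i k * Aᵀ k j) (Set.Ioi 0) :=
      integrable_finset_sum _ fun k _ => (hint i k).mul_const _
    calc (A * S + S * Aᵀ) i j
        = ∑ k, A i k * S k j + ∑ k, S i k * Aᵀ k j := by
          simp [Matrix.mul_apply, Matrix.add_apply]
      _ = 2 * ((∑ k, A i k * ∫ s in Set.Ioi (0:ℝ), lyapF A B s k j)
            + ∑ k, (∫ s in Set.Ioi (0:ℝ), lyapF A B s i k) * Aᵀ k j) := by
          simp only [hS1]
          rw [mul_add, Finset.mul_sum, Finset.mul_sum]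
          congr 1 <;> exact Finset.sum_congr rfl fun k _ => by ring
      _ = 2 * ((∫ s in Set.Ioi (0:ℝ), ∑ k, A i k * lyapF A B s k j)
            + ∫ s in Set.Ioi (0:ℝ), ∑ k, lyapF A B s i k * Aᵀ k j) := by
          rw [e1, e2]
      _ = 2 * ∫ s in Set.Ioi (0:ℝ), ((A * lyapF A B s) i j + (lyapF A B s * Aᵀ) i j) := by
          rw [← MeasureTheory.integral_add int1 int2]
          congr 1
      _ = 2 * B i j := by rw [lyapF_deriv_integral A B κ₀ hκ₀ hA' hAT' i j]
      _ = ((2 : ℝ) • B) i j := by simp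
  · -- symmetry
    intro hB
    have hsym : ∀ s : ℝ, (lyapF A B s)ᵀ = lyapF A B s := by
      intro s
      unfold lyapF
      rw [Matrix.transpose_mul, Matrix.transpose_mul, ← Matrix.exp_transpose,
        ← Matrix.exp_transpose, hB]
      simp only [Matrix.transpose_neg, Matrix.transpose_smul, Matrix.transpose_transpose]
      rw [Matrix.mul_assoc]
    ext i j
    rw [Matrix.transpose_apply, hS1, hS1]
    congr 1
    refine congrArg _ (funext fun s => ?_)
    conv_lhs => rw [← hsym s]
    rw [Matrix.transpose_apply]
  · -- positive semidefiniteness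
    intro hB hBpos ξ
    have hQ : ∀ s : ℝ, 0 ≤ ∑ i, (∑ j, lyapF A B s i j * ξ j) * ξ i := by
      intro s
      have hFT : exp (-(s • Aᵀ)) = (exp (-(s • A)))ᵀ := by
        rw [← Matrix.exp_transpose]
        congr 1
      have key : ∑ i, (∑ j, lyapF A B s i j * ξ j) * ξ i
          = ∑ i, (∑ j, B i j * ((exp (-(s • A)))ᵀ *ᵥ ξ) j) * ((exp (-(s • A)))ᵀ *ᵥ ξ) i := by
        show ((lyapF A B s) *ᵥ ξ) ⬝ᵥ ξ
          = (B *ᵥ ((exp (-(s • A)))ᵀ *ᵥ ξ)) ⬝ᵥ ((exp (-(s • A)))ᵀ *ᵥ ξ)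
        unfold lyapF
        rw [hFT, ← Matrix.mulVec_mulVec, ← Matrix.mulVec_mulVec, dotProduct_comm,
          Matrix.dotProduct_mulVec, ← Matrix.mulVec_transpose, dotProduct_comm]
      rw [key]
      exact hBpos _
    have expand : ∑ i, (∑ j, S i j * ξ j) * ξ i
        = 2 * ∫ s in Set.Ioi (0:ℝ), ∑ i, (∑ j, lyapF A B s i j * ξ j) * ξ i := by
      have step1 : ∀ i, (∑ j, S i j * ξ j) * ξ i
          = ∑ j, ∫ s in Set.Ioi (0:ℝ), (2 * (ξ j * ξ i)) * lyapF A B s i j := by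
        intro i
        rw [Finset.sum_mul]
        refine Finset.sum_congr rfl fun j _ => ?_
        rw [show S i j * ξ j * ξ i
            = (2 * (ξ j * ξ i)) * ∫ s in Set.Ioi (0:ℝ), lyapF A B s i j from by
          rw [hS1]; ring]
        rw [← MeasureTheory.integral_const_mul]
      rw [Finset.sum_congr rfl fun i _ => step1 i]
      have step2 : ∀ i, (∑ j, ∫ s in Set.Ioi (0:ℝ), (2 * (ξ j * ξ i)) * lyapF A B s i j)
          = ∫ s in Set.Ioi (0:ℝ), ∑ j, (2 * (ξ j * ξ i)) * lyapF A B s i j := fun i =>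
        (MeasureTheory.integral_finset_sum _ fun j _ => ((hint i j).const_mul _)).symm
      rw [Finset.sum_congr rfl fun i _ => step2 i,
        ← MeasureTheory.integral_finset_sum _ fun i _ =>
          (integrable_finset_sum _ fun j _ => ((hint i j).const_mul _)),
        ← MeasureTheory.integral_const_mul]
      congr 1
      funext s
      rw [Finset.mul_sum]
      refine Finset.sum_congr rfl fun i _ => ?_
      rw [Finset.sum_mul, Finset.mul_sum]
      refine Finset.sum_congr rfl fun j _ => ?_
      ring
    rw [expand]
    exact mul_nonneg (by norm_num) (MeasureTheory.integral_nonneg fun s => hQ s)
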